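/- For λ > 16, the two numbers x = (√λ − 2 + √(λ − 4√λ))/(2λ) and y = (√λ − 2 − √(λ − 4√λ))/(2λ) satisfy λ²xy = 1 and x ≠ y, and (x,y) solves the system x = (1+λx)^(-1)(1+λy)^(-3), y = (1+λy)^(-1)(1+λx)^(-3). -/

import Mathlib

theorem stmt_10 (lam : ℝ) (hlam : 16 < lam) :
    let x : ℝ := (Real.sqrt lam - 2 + Real.sqrt (lam - 4 * Real.sqrt lam)) / (2 * lam)
    let y : ℝ := (Real.sqrt lam - 2 - Real.sqrt (lam - 4 * Real.sqrt lam)) / (2 * lam)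
    lam ^ 2 * x * y = 1 ∧ x ≠ y ∧
    x = ((1 + lam * x))⁻¹ * ((1 + lam * y) ^ 3)⁻¹ ∧
    y = ((1 + lam * y))⁻¹ * ((1 + lam * x) ^ 3)⁻¹ := by
  intro x y
  have hlam0 : (0:ℝ) < lam := by linarith
  set s := Real.sqrt lam with hs_def
  have hs2 : s ^ 2 = lam := Real.sq_sqrt hlam0.le
  have hs0 : 0 ≤ s := Real.sqrt_nonneg lam
  have hs4 : 4 < s := by nlinarith
  have hpos : 0 < lam - 4 * s := by nlinarith
  set t := Real.sqrt (lam - 4 * s) with ht_def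
  have ht2 : t ^ 2 = lam - 4 * s := Real.sq_sqrt hpos.le
  have ht0 : 0 < t := Real.sqrt_pos.mpr hpos
  have hst : t < s := by nlinarith
  have hx : x = (s - 2 + t) / (2 * lam) := rfl
  have hy : y = (s - 2 - t) / (2 * lam) := rfl
  have h1x : 1 + lam * x = (s + t) / 2 := by
    rw [hx]; field_simp; ring
  have h1y : 1 + lam * y = (s - t) / 2 := by
    rw [hy]; field_simp; ring
  have hstpos : 0 < s + t := by linarith
  have hsmpos : 0 < s - t := by linarith
  refine ⟨?_, ?_, ?_, ?_⟩
  · rw [hx, hy]; field_simp; linear_combination hs2 - ht2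
  · rw [hx, hy]; intro h; field_simp at h; linarith
  · rw [hx, h1x, h1y]; field_simp; linear_combination (32 - (-t^3 + s*t^2 + 2*t^2 + s^2*t - s^3 - 2*s^2 - 8*s)) * hs2 + (-t^3 + s*t^2 + 2*t^2 + s^2*t - s^3 - 2*s^2 - 8*s) * ht2
  · rw [hy, h1x, h1y]; field_simp; linear_combination (32 - (t^3 + s*t^2 + 2*t^2 - s^2*t - s^3 - 2*s^2 - 8*s)) * hs2 + (t^3 + s*t^2 + 2*t^2 - s^2*t - s^3 - 2*s^2 - 8*s) * ht2
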